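/- For every nonempty OOEBP instance I with item sizes in (0,1], the Next Fit algorithm uses at most 2·OPT(I) bins. -/

import Mathlib

open scoped BigOperators Classical

namespace OOEBP

noncomputable section

/-- Load of bin `b` under packing `p` of instance `s`. -/
def binLoad (s : List ℝ) (p : ℕ → ℕ) (b : ℕ) : ℝ :=
  ∑ j ∈ Finset.range s.length, if p j = b then s.getD j 0 else 0

/-- A packing is feasible if each item is placed into a bin whose current
load (total size of earlier items in the same bin) is strictly below 1. -/
def Feasible (s : List ℝ) (p : ℕ → ℕ) : Prop :=
  ∀ i < s.length,
    (∑ j ∈ Finset.range i, if p j = p i then s.getD j 0 else 0) < 1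

/-- The cost of a packing: the number of nonempty bins. -/
def cost (s : List ℝ) (p : ℕ → ℕ) : ℕ :=
  ((Finset.range s.length).image p).card

/-- Optimal cost of a feasible packing of `s`. -/
def OPT (s : List ℝ) : ℕ :=
  sInf {m | ∃ p, Feasible s p ∧ cost s p = m}

/-- Item `i` is the exceeding item of its bin: the bin's total size is at
least 1 and `i` is the item of maximum index in its bin. -/
def IsExceeding (s : List ℝ) (p : ℕ → ℕ) (i : ℕ) : Prop :=
  i < s.length ∧ 1 ≤ binLoad s p (p i) ∧
    ∀ j, i < j → j < s.length → p j ≠ p i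

/-- One step of Next Fit: the state is (index of the open bin, its load).
An item is placed into the open bin if its load is strictly below 1, and
otherwise a new bin is opened for it. -/
def nfStep : ℕ × ℝ → ℝ → ℕ × ℝ :=
  fun st x => if st.2 < 1 then (st.1, st.2 + x) else (st.1 + 1, x)

/-- The number of bins used by Next Fit. -/
def nfCost (s : List ℝ) : ℕ :=
  if s.isEmpty then 0 else (s.foldl nfStep (0, 0)).1 + 1

-- sum over range of getD equals list sum
lemma sum_getD (s : List ℝ) : ∑ j ∈ Finset.range s.length, s.getD j 0 = s.sum := by
  induction s with
  | nil => simp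
  | cons x t ih =>
    rw [List.length_cons, Finset.sum_range_succ']
    simp only [List.getD_cons_succ, List.getD_cons_zero, ih, List.sum_cons]
    ring

lemma binLoad_lt_two (s : List ℝ) (p : ℕ → ℕ) (hs : ∀ x ∈ s, 0 < x ∧ x ≤ 1)
    (hp : Feasible s p) (b : ℕ) (hb : b ∈ (Finset.range s.length).image p) :
    binLoad s p b < 2 := by
  classical
  set n := s.length with hn
  set F := (Finset.range n).filter (fun j => p j = b) with hF
  have hFne : F.Nonempty := by
    obtain ⟨i, hi, hpi⟩ := Finset.mem_image.mp hb
    exact ⟨i, by simp [hF, Finset.mem_range.mp hi, hpi]⟩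
  set i := F.max' hFne with hi
  have hiF : i ∈ F := F.max'_mem hFne
  have hiltn : i < n := Finset.mem_range.mp (Finset.mem_filter.mp hiF).1
  have hpi : p i = b := (Finset.mem_filter.mp hiF).2
  have hsplit : binLoad s p b =
      (∑ j ∈ Finset.range i, if p j = b then s.getD j 0 else 0) +
      (if p i = b then s.getD i 0 else 0) +
      (∑ j ∈ Finset.Ico (i+1) n, if p j = b then s.getD j 0 else 0) := by
    unfold binLoad
    rw [← hn, ← Finset.sum_range_succ]
    rw [Finset.range_eq_Ico, Finset.range_eq_Ico]
    exact (Finset.sum_Ico_consecutive (f := fun j => if p j = b then s.getD j 0 else 0) (Nat.zero_le (i+1)) (Nat.succ_le_of_lt hiltn)).symm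
  have h3 : (∑ j ∈ Finset.Ico (i+1) n, if p j = b then s.getD j 0 else 0) = 0 := by
    apply Finset.sum_eq_zero
    intro j hj
    obtain ⟨hj1, hj2⟩ := Finset.mem_Ico.mp hj
    have : p j ≠ b := by
      intro h
      have : j ∈ F := by simp [hF, Finset.mem_range.mpr hj2, h]
      have := F.le_max' j this
      omega
    simp [this]
  have h1 : (∑ j ∈ Finset.range i, if p j = b then s.getD j 0 else 0) < 1 := by
    have := hp i hiltn
    rwa [hpi] at this
  have h2 : s.getD i 0 ≤ 1 := by
    rw [List.getD_eq_getElem s 0 hiltn]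
    exact (hs _ (List.getElem_mem hiltn)).2
  rw [hsplit, h3, if_pos hpi]
  linarith

lemma sum_lt_two_cost (s : List ℝ) (hne : s ≠ []) (hs : ∀ x ∈ s, 0 < x ∧ x ≤ 1)
    (p : ℕ → ℕ) (hp : Feasible s p) :
    s.sum < 2 * cost s p := by
  classical
  set B := (Finset.range s.length).image p with hB
  have hsum : s.sum = ∑ b ∈ B, binLoad s p b := by
    rw [← sum_getD]
    unfold binLoad
    rw [Finset.sum_comm]
    apply Finset.sum_congr rfl
    intro j hj
    rw [Finset.sum_ite_eq B (p j) (fun _ => s.getD j 0)]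
    rw [if_pos (by exact Finset.mem_image_of_mem p hj)]
  have hBne : B.Nonempty := by
    refine ⟨p 0, Finset.mem_image_of_mem p ?_⟩
    simp [Finset.mem_range, List.length_pos_iff.mpr hne]
  have : ∑ b ∈ B, binLoad s p b < ∑ b ∈ B, (2:ℝ) :=
    Finset.sum_lt_sum_of_nonempty hBne (fun b hb => binLoad_lt_two s p hs hp b hb)
  rw [Finset.sum_const, nsmul_eq_mul] at this
  rw [hsum]
  calc ∑ b ∈ B, binLoad s p b < B.card * 2 := this
  _ = 2 * cost s p := by rw [cost, ← hB]; ring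

lemma nf_inv (l : List ℝ) (hl : ∀ x ∈ l, 0 < x) (st : ℕ × ℝ) (hst : 0 ≤ st.2) :
    ((l.foldl nfStep st).1 : ℝ) + (l.foldl nfStep st).2 ≤ (st.1 : ℝ) + st.2 + l.sum ∧
    0 ≤ (l.foldl nfStep st).2 ∧ (l ≠ [] → 0 < (l.foldl nfStep st).2) := by
  induction l generalizing st with
  | nil => simpa using hst
  | cons x t ih =>
    have hx : 0 < x := hl x List.mem_cons_self
    have ht : ∀ y ∈ t, 0 < y := fun y hy => hl y (List.mem_cons_of_mem _ hy)
    rw [List.foldl_cons]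
    by_cases h : st.2 < 1
    · have hstep : nfStep st x = (st.1, st.2 + x) := by simp [nfStep, h]
      rw [hstep]
      obtain ⟨h1, h2, h3⟩ := ih ht (st.1, st.2 + x) (by positivity)
      refine ⟨?_, h2, fun _ => ?_⟩
      · simp only at h1
        rw [List.sum_cons]; linarith
      · rcases eq_or_ne t [] with rfl | htne
        · simpa using (by positivity : (0:ℝ) < st.2 + x)
        · exact h3 htne
    · have hstep : nfStep st x = (st.1 + 1, x) := by simp [nfStep, h]
      rw [hstep]
      obtain ⟨h1, h2, h3⟩ := ih ht (st.1 + 1, x) (le_of_lt hx)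
      push_neg at h
      refine ⟨?_, h2, fun _ => ?_⟩
      · simp only at h1
        rw [List.sum_cons]
        push_cast at h1 ⊢
        linarith
      · rcases eq_or_ne t [] with rfl | htne
        · simpa using hx
        · exact h3 htne


/-- on every nonempty instance, Next Fit uses at most
`2·OPT(I)` bins. -/
theorem stmt3 (s : List ℝ) (hne : s ≠ [])
    (hs : ∀ x ∈ s, 0 < x ∧ x ≤ 1) :
    nfCost s ≤ 2 * OPT s := by
  classical
  -- OPT is attained
  have hset : Feasible s id ∧ cost s id = s.length := by
    constructor
    · intro i hi
      have : (∑ j ∈ Finset.range i, if (id j : ℕ) = id i then s.getD j 0 else 0) = 0 := by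
        apply Finset.sum_eq_zero
        intro j hj
        have : j ≠ i := Nat.ne_of_lt (Finset.mem_range.mp hj)
        simp [this]
      rw [this]; norm_num
    · simp [cost, Finset.image_id]
  have hOPTmem : OPT s ∈ {m | ∃ p, Feasible s p ∧ cost s p = m} :=
    Nat.sInf_mem ⟨s.length, id, hset.1, hset.2⟩
  obtain ⟨p, hp, hpc⟩ := hOPTmem
  have hlt : s.sum < 2 * OPT s := by
    have := sum_lt_two_cost s hne hs p hp
    rwa [hpc] at this
  -- NF bound
  have hl : ∀ x ∈ s, 0 < x := fun x hx => (hs x hx).1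
  obtain ⟨h1, _, h3⟩ := nf_inv s hl (0, 0) le_rfl
  have hpos := h3 hne
  set r := s.foldl nfStep (0, 0) with hr
  have hb : (r.1 : ℝ) < s.sum := by
    simp only at h1
    push_cast at h1
    linarith
  have hnf : nfCost s = r.1 + 1 := by
    rw [nfCost, if_neg (by simpa using hne)]
  rw [hnf]
  have : (r.1 : ℝ) < 2 * OPT s := lt_trans hb hlt
  have : r.1 < 2 * OPT s := by exact_mod_cast this
  omega


end

end OOEBP
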